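/- Let n ≥ 3. On the set where all coordinates of x are nonzero and x ≠ 0, the derivative X_1Ñ(x), where X_1 = ∂_{x_1} and Ñ(x) = (‖x‖ⁿ+|x_{n+1}|)^{1/n}, satisfies the lower bound |X_1 Ñ(x)| ≥ C ‖x‖^{(n−1)/2} |x_1|^{(n−1)/2} / Ñ(x)^{n−1} for some constant C = C(n) > 0. -/

import Mathlib

open Real Finset

/-- The quasi-norm `‖x‖` on the filiform group `G_{n+1}`. -/
noncomputable def filNorm (n : ℕ) (x : ℕ → ℝ) : ℝ :=
  (∑ j ∈ Finset.Icc 2 n,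
      (|x 1| ^ (((n : ℝ) + 1) / 2) + |x 2| ^ (((n : ℝ) + 1) / 2)
        + |x j| ^ (((n : ℝ) + 1) / (2 * ((j : ℝ) - 1)))) ^ (2 * (n : ℝ) / ((n : ℝ) + 1)))
    ^ (1 / (n : ℝ))

/-- The homogeneous norm `Ñ(x) = (‖x‖ⁿ + |x_{n+1}|)^{1/n}` on `G_{n+1}`. -/
noncomputable def filN (n : ℕ) (x : ℕ → ℝ) : ℝ :=
  (filNorm n x ^ (n : ℝ) + |x (n + 1)|) ^ (1 / (n : ℝ))





private lemma aux_abs_pow_deriv {p q r c a : ℝ} {s : Finset ℕ} {B : ℕ → ℝ}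
    (ha : a ≠ 0) (hB : ∀ j ∈ s, 0 < B j)
    (hpos : 0 < (∑ j ∈ s, (|a| ^ p + B j) ^ q) + c) :
    HasDerivAt (fun t : ℝ => ((∑ j ∈ s, (|a + t| ^ p + B j) ^ q) + c) ^ r)
      (r * ((∑ j ∈ s, (|a| ^ p + B j) ^ q) + c) ^ (r - 1) *
        ((∑ j ∈ s, q * (|a| ^ p + B j) ^ (q - 1)) *
          (p * |a| ^ (p - 1) * (SignType.sign a : ℝ)))) 0 := by
  have habs : HasDerivAt (fun t : ℝ => |a + t|) ((SignType.sign a : ℝ)) 0 := by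
    have h1 : HasDerivAt (fun t : ℝ => a + t) 1 0 := (hasDerivAt_id 0).const_add a
    have h2 : HasDerivAt (fun y : ℝ => |y|) ((SignType.sign a : ℝ)) (a + 0) := by
      rw [add_zero]; exact hasDerivAt_abs ha
    have h3 : HasDerivAt (fun t : ℝ => |a + t|) ((SignType.sign a : ℝ) * 1) 0 := h2.comp 0 h1
    simpa using h3
  have hpow : HasDerivAt (fun t : ℝ => |a + t| ^ p)
      (p * |a| ^ (p - 1) * (SignType.sign a : ℝ)) 0 := by
    have h2 : HasDerivAt (fun y : ℝ => y ^ p) (p * |a| ^ (p - 1)) (|a + 0|) := by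
      rw [add_zero]; exact Real.hasDerivAt_rpow_const (Or.inl (abs_ne_zero.mpr ha))
    exact h2.comp 0 habs
  have hApos : ∀ j ∈ s, 0 < |a| ^ p + B j := fun j hj =>
    add_pos_of_nonneg_of_pos (Real.rpow_nonneg (abs_nonneg _) _) (hB j hj)
  have hterm : ∀ j ∈ s, HasDerivAt (fun t : ℝ => (|a + t| ^ p + B j) ^ q)
      (q * (|a| ^ p + B j) ^ (q - 1) * (p * |a| ^ (p - 1) * (SignType.sign a : ℝ))) 0 := by
    intro j hj
    have hbase : HasDerivAt (fun t : ℝ => |a + t| ^ p + B j)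
        (p * |a| ^ (p - 1) * (SignType.sign a : ℝ)) 0 := hpow.add_const _
    have h2 : HasDerivAt (fun y : ℝ => y ^ q) (q * (|a| ^ p + B j) ^ (q - 1))
        (|a + 0| ^ p + B j) := by
      rw [add_zero]; exact Real.hasDerivAt_rpow_const (Or.inl (hApos j hj).ne')
    exact h2.comp 0 hbase
  have hsum : HasDerivAt (fun t : ℝ => (∑ j ∈ s, (|a + t| ^ p + B j) ^ q) + c)
      (∑ j ∈ s, q * (|a| ^ p + B j) ^ (q - 1) * (p * |a| ^ (p - 1) * (SignType.sign a : ℝ))) 0 :=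
    (HasDerivAt.fun_sum hterm).add_const c
  have houter : HasDerivAt (fun y : ℝ => y ^ r)
      (r * ((∑ j ∈ s, (|a| ^ p + B j) ^ q) + c) ^ (r - 1))
      ((∑ j ∈ s, (|a + 0| ^ p + B j) ^ q) + c) := by
    simp only [add_zero]
    exact Real.hasDerivAt_rpow_const (Or.inl hpos.ne')
  have h : HasDerivAt (fun t : ℝ => ((∑ j ∈ s, (|a + t| ^ p + B j) ^ q) + c) ^ r)
      (r * ((∑ j ∈ s, (|a| ^ p + B j) ^ q) + c) ^ (r - 1) *
        ∑ j ∈ s, q * (|a| ^ p + B j) ^ (q - 1) * (p * |a| ^ (p - 1) * (SignType.sign a : ℝ))) 0 :=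
    by have h' := houter.comp 0 hsum; exact h'
  convert h using 1
  rw [Finset.sum_mul]


private lemma aux_core {n : ℕ} (hn : 3 ≤ n) {a c : ℝ} (ha : a ≠ 0) (hc : 0 ≤ c)
    {B : ℕ → ℝ} (hB : ∀ j ∈ Finset.Icc 2 n, 0 < B j) {d : ℝ}
    (hd : HasDerivAt (fun t : ℝ =>
        ((∑ j ∈ Finset.Icc 2 n,
            (|a + t| ^ (((n : ℝ) + 1) / 2) + B j) ^ (2 * (n : ℝ) / ((n : ℝ) + 1))) + c)
          ^ (1 / (n : ℝ))) d 0) :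
    ((n : ℝ) - 1) ^ (-(((n : ℝ) - 1) / (2 * (n : ℝ)))) *
        ((∑ j ∈ Finset.Icc 2 n,
            (|a| ^ (((n : ℝ) + 1) / 2) + B j) ^ (2 * (n : ℝ) / ((n : ℝ) + 1)))
          ^ (1 / (n : ℝ))) ^ (((n : ℝ) - 1) / 2) *
        |a| ^ (((n : ℝ) - 1) / 2) /
        ((((∑ j ∈ Finset.Icc 2 n,
            (|a| ^ (((n : ℝ) + 1) / 2) + B j) ^ (2 * (n : ℝ) / ((n : ℝ) + 1))) + c)
          ^ (1 / (n : ℝ))) ^ ((n : ℝ) - 1)) ≤ |d| := by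
  have hn3 : (3 : ℝ) ≤ (n : ℝ) := by exact_mod_cast hn
  have hn0 : (n : ℝ) ≠ 0 := by linarith
  have hn1 : (0 : ℝ) < (n : ℝ) - 1 := by linarith
  have hnp1 : (0 : ℝ) < (n : ℝ) + 1 := by linarith
  set p : ℝ := ((n : ℝ) + 1) / 2 with hpdef
  set q : ℝ := 2 * (n : ℝ) / ((n : ℝ) + 1) with hqdef
  set r : ℝ := 1 / (n : ℝ) with hrdef
  have hApos : ∀ j ∈ Finset.Icc 2 n, 0 < |a| ^ p + B j := fun j hj =>
    add_pos_of_nonneg_of_pos (Real.rpow_nonneg (abs_nonneg _) _) (hB j hj)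
  set S : ℝ := ∑ j ∈ Finset.Icc 2 n, (|a| ^ p + B j) ^ q with hSdef
  have hSpos : 0 < S := by
    refine Finset.sum_pos (fun j hj => Real.rpow_pos_of_pos (hApos j hj) _) ?_
    exact ⟨2, Finset.mem_Icc.mpr ⟨le_refl 2, by omega⟩⟩
  set T : ℝ := S + c with hTdef
  have hTpos : 0 < T := add_pos_of_pos_of_nonneg hSpos hc
  -- the explicit derivative
  have hD := aux_abs_pow_deriv (p := p) (q := q) (r := r) ha hB hTpos
  have hdeq : d = r * T ^ (r - 1) *
      ((∑ j ∈ Finset.Icc 2 n, q * (|a| ^ p + B j) ^ (q - 1)) *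
        (p * |a| ^ (p - 1) * (SignType.sign a : ℝ))) := hd.unique hD
  set Sig : ℝ := ∑ j ∈ Finset.Icc 2 n, (|a| ^ p + B j) ^ (q - 1) with hSigdef
  have hSignn : 0 ≤ Sig :=
    Finset.sum_nonneg fun j hj => Real.rpow_nonneg (hApos j hj).le _
  have hσ : |(SignType.sign a : ℝ)| = 1 := by
    rcases ha.lt_or_gt with h | h
    · simp [sign_neg h]
    · simp [sign_pos h]
  -- |d| computation
  have hQ : (∑ j ∈ Finset.Icc 2 n, q * (|a| ^ p + B j) ^ (q - 1)) = q * Sig := by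
    rw [hSigdef, Finset.mul_sum]
  have hrpq : r * q * p = 1 := by
    rw [hrdef, hqdef, hpdef]; field_simp
  have habsd : |d| = T ^ (r - 1) * Sig * |a| ^ (p - 1) := by
    have hd2 : d = (T ^ (r - 1) * Sig * |a| ^ (p - 1)) * (SignType.sign a : ℝ) := by
      rw [hdeq, hQ]
      calc r * T ^ (r - 1) * (q * Sig * (p * |a| ^ (p - 1) * (SignType.sign a : ℝ)))
          = (r * q * p) * ((T ^ (r - 1) * Sig * |a| ^ (p - 1)) * (SignType.sign a : ℝ)) := by
            ring
        _ = (T ^ (r - 1) * Sig * |a| ^ (p - 1)) * (SignType.sign a : ℝ) := by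
            rw [hrpq, one_mul]
    rw [hd2, abs_mul, hσ, mul_one]
    refine abs_of_nonneg ?_
    exact mul_nonneg (mul_nonneg (Real.rpow_nonneg hTpos.le _) hSignn)
      (Real.rpow_nonneg (abs_nonneg _) _)
  -- key sum inequality
  have key : ((n : ℝ) - 1) ^ (-(((n : ℝ) - 1) / (2 * (n : ℝ)))) *
      S ^ (((n : ℝ) - 1) / (2 * (n : ℝ))) ≤ Sig := by
    set e : ℝ := ((n : ℝ) - 1) / (2 * (n : ℝ)) with hedef
    have hstep : ∀ j ∈ Finset.Icc 2 n,
        (|a| ^ p + B j) ^ q ≤ Sig ^ (2 * (n : ℝ) / ((n : ℝ) - 1)) := by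
      intro j hj
      have h1 : (|a| ^ p + B j) ^ q
          = ((|a| ^ p + B j) ^ (q - 1)) ^ (2 * (n : ℝ) / ((n : ℝ) - 1)) := by
        rw [← Real.rpow_mul (hApos j hj).le]
        congr 1
        rw [hqdef]; field_simp; ring
      rw [h1]
      refine Real.rpow_le_rpow (Real.rpow_nonneg (hApos j hj).le _) ?_
        (div_nonneg (by positivity) hn1.le)
      exact Finset.single_le_sum (fun i hi => Real.rpow_nonneg (hApos i hi).le _) hj
    have hS_le : S ≤ ((n : ℝ) - 1) * Sig ^ (2 * (n : ℝ) / ((n : ℝ) - 1)) := by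
      calc S ≤ ∑ _j ∈ Finset.Icc 2 n, Sig ^ (2 * (n : ℝ) / ((n : ℝ) - 1)) :=
            Finset.sum_le_sum hstep
        _ = ((n - 1 : ℕ) : ℝ) * Sig ^ (2 * (n : ℝ) / ((n : ℝ) - 1)) := by
            rw [Finset.sum_const, Nat.card_Icc, nsmul_eq_mul]
            have h21 : n + 1 - 2 = n - 1 := by omega
            rw [h21]
        _ = ((n : ℝ) - 1) * Sig ^ (2 * (n : ℝ) / ((n : ℝ) - 1)) := by
            rw [Nat.cast_sub (by omega : 1 ≤ n), Nat.cast_one]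
    have h2 : S ^ e ≤ ((n : ℝ) - 1) ^ e * Sig := by
      calc S ^ e ≤ (((n : ℝ) - 1) * Sig ^ (2 * (n : ℝ) / ((n : ℝ) - 1))) ^ e :=
            Real.rpow_le_rpow hSpos.le hS_le
              (by rw [hedef]; exact div_nonneg hn1.le (by positivity))
        _ = ((n : ℝ) - 1) ^ e * (Sig ^ (2 * (n : ℝ) / ((n : ℝ) - 1))) ^ e :=
            Real.mul_rpow hn1.le (Real.rpow_nonneg hSignn _)
        _ = ((n : ℝ) - 1) ^ e * Sig := by
            rw [← Real.rpow_mul hSignn]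
            rw [show (2 * (n : ℝ) / ((n : ℝ) - 1)) * e = 1 by
              rw [hedef]; field_simp]
            rw [Real.rpow_one]
    calc ((n : ℝ) - 1) ^ (-e) * S ^ e ≤ ((n : ℝ) - 1) ^ (-e) * (((n : ℝ) - 1) ^ e * Sig) :=
          mul_le_mul_of_nonneg_left h2 (Real.rpow_nonneg hn1.le _)
      _ = Sig := by
          rw [← mul_assoc, ← Real.rpow_add hn1, neg_add_cancel, Real.rpow_zero, one_mul]
  -- rewrite the goal
  have hgoal_eq : ((n : ℝ) - 1) ^ (-(((n : ℝ) - 1) / (2 * (n : ℝ)))) *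
      (S ^ r) ^ (((n : ℝ) - 1) / 2) * |a| ^ (((n : ℝ) - 1) / 2) / ((T ^ r) ^ ((n : ℝ) - 1))
      = (((n : ℝ) - 1) ^ (-(((n : ℝ) - 1) / (2 * (n : ℝ)))) *
          S ^ (((n : ℝ) - 1) / (2 * (n : ℝ)))) * (|a| ^ (p - 1) * T ^ (r - 1)) := by
    rw [← Real.rpow_mul hSpos.le, ← Real.rpow_mul hTpos.le, div_eq_mul_inv,
        ← Real.rpow_neg hTpos.le]
    rw [show r * (((n : ℝ) - 1) / 2) = ((n : ℝ) - 1) / (2 * (n : ℝ)) by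
      rw [hrdef, div_mul_div_comm, one_mul, mul_comm]]
    rw [show -(r * ((n : ℝ) - 1)) = r - 1 by
      rw [hrdef, mul_comm, mul_one_div, ← neg_div, neg_sub, sub_div, div_self hn0]]
    rw [show (((n : ℝ) - 1) / 2) = p - 1 by rw [hpdef]; ring]
    ring
  rw [habsd, hgoal_eq]
  calc (((n : ℝ) - 1) ^ (-(((n : ℝ) - 1) / (2 * (n : ℝ)))) *
        S ^ (((n : ℝ) - 1) / (2 * (n : ℝ)))) * (|a| ^ (p - 1) * T ^ (r - 1))
      ≤ Sig * (|a| ^ (p - 1) * T ^ (r - 1)) := by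
        refine mul_le_mul_of_nonneg_right key ?_
        exact mul_nonneg (Real.rpow_nonneg (abs_nonneg _) _) (Real.rpow_nonneg hTpos.le _)
    _ = T ^ (r - 1) * Sig * |a| ^ (p - 1) := by ring

/-- Lower bound for `|X₁Ñ(x)|`, `X₁ = ∂_{x₁}`:
`|X₁Ñ(x)| ≥ C ‖x‖^{(n−1)/2} |x₁|^{(n−1)/2} / Ñ(x)^{n−1}` on the set of points with all
coordinates nonzero, with `C = C(n) > 0`. -/

theorem X1_filN_lower_bound (n : ℕ) (hn : 3 ≤ n) :
    ∃ C : ℝ, 0 < C ∧ ∀ x : ℕ → ℝ, (∀ i ∈ Finset.Icc 1 (n + 1), x i ≠ 0) →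
      ∀ d : ℝ, HasDerivAt (fun t => filN n (Function.update x 1 (x 1 + t))) d 0 →
        C * filNorm n x ^ (((n : ℝ) - 1) / 2) * |x 1| ^ (((n : ℝ) - 1) / 2)
          / filN n x ^ ((n : ℝ) - 1) ≤ |d| := by
  have hn3 : (3 : ℝ) ≤ (n : ℝ) := by exact_mod_cast hn
  have hn0 : (n : ℝ) ≠ 0 := by linarith
  have hn1 : (0 : ℝ) < (n : ℝ) - 1 := by linarith
  refine ⟨((n : ℝ) - 1) ^ (-(((n : ℝ) - 1) / (2 * (n : ℝ)))),
    Real.rpow_pos_of_pos hn1 _, ?_⟩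
  intro x hx d hd
  have hx1 : x 1 ≠ 0 := hx 1 (Finset.mem_Icc.mpr ⟨le_refl 1, by omega⟩)
  have hx2 : x 2 ≠ 0 := hx 2 (Finset.mem_Icc.mpr ⟨by omega, by omega⟩)
  have hB : ∀ j ∈ Finset.Icc 2 n,
      0 < |x 2| ^ (((n : ℝ) + 1) / 2) + |x j| ^ (((n : ℝ) + 1) / (2 * ((j : ℝ) - 1))) :=
    fun j _ => add_pos_of_pos_of_nonneg (Real.rpow_pos_of_pos (abs_pos.mpr hx2) _)
      (Real.rpow_nonneg (abs_nonneg _) _)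
  have hNorm : ∀ t : ℝ, filNorm n (Function.update x 1 (x 1 + t))
      = (∑ j ∈ Finset.Icc 2 n, (|x 1 + t| ^ (((n : ℝ) + 1) / 2)
          + (|x 2| ^ (((n : ℝ) + 1) / 2) + |x j| ^ (((n : ℝ) + 1) / (2 * ((j : ℝ) - 1)))))
            ^ (2 * (n : ℝ) / ((n : ℝ) + 1))) ^ (1 / (n : ℝ)) := by
    intro t
    rw [filNorm]
    congr 1
    refine Finset.sum_congr rfl fun j hj => ?_
    obtain ⟨hj2, hjn⟩ := Finset.mem_Icc.mp hj
    rw [Function.update_self, Function.update_of_ne (by omega : (2 : ℕ) ≠ 1),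
        Function.update_of_ne (by omega : j ≠ 1), add_assoc]
  have hG : ∀ t : ℝ, filN n (Function.update x 1 (x 1 + t))
      = ((∑ j ∈ Finset.Icc 2 n, (|x 1 + t| ^ (((n : ℝ) + 1) / 2)
          + (|x 2| ^ (((n : ℝ) + 1) / 2) + |x j| ^ (((n : ℝ) + 1) / (2 * ((j : ℝ) - 1)))))
            ^ (2 * (n : ℝ) / ((n : ℝ) + 1))) + |x (n + 1)|) ^ (1 / (n : ℝ)) := by
    intro t
    have hSnn : (0 : ℝ) ≤ ∑ j ∈ Finset.Icc 2 n, (|x 1 + t| ^ (((n : ℝ) + 1) / 2)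
        + (|x 2| ^ (((n : ℝ) + 1) / 2) + |x j| ^ (((n : ℝ) + 1) / (2 * ((j : ℝ) - 1)))))
          ^ (2 * (n : ℝ) / ((n : ℝ) + 1)) :=
      Finset.sum_nonneg fun j hj => Real.rpow_nonneg
        (add_nonneg (Real.rpow_nonneg (abs_nonneg _) _) (hB j hj).le) _
    rw [filN, hNorm t, Function.update_of_ne (by omega : n + 1 ≠ 1),
        ← Real.rpow_mul hSnn, one_div, inv_mul_cancel₀ hn0, Real.rpow_one]
  rw [funext hG] at hd
  have hNormx : filNorm n x
      = (∑ j ∈ Finset.Icc 2 n, (|x 1| ^ (((n : ℝ) + 1) / 2)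
          + (|x 2| ^ (((n : ℝ) + 1) / 2) + |x j| ^ (((n : ℝ) + 1) / (2 * ((j : ℝ) - 1)))))
            ^ (2 * (n : ℝ) / ((n : ℝ) + 1))) ^ (1 / (n : ℝ)) := by
    have h := hNorm 0
    simpa using h
  have hNx : filN n x
      = ((∑ j ∈ Finset.Icc 2 n, (|x 1| ^ (((n : ℝ) + 1) / 2)
          + (|x 2| ^ (((n : ℝ) + 1) / 2) + |x j| ^ (((n : ℝ) + 1) / (2 * ((j : ℝ) - 1)))))
            ^ (2 * (n : ℝ) / ((n : ℝ) + 1))) + |x (n + 1)|) ^ (1 / (n : ℝ)) := by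
    have h := hG 0
    simpa using h
  rw [hNormx, hNx]
  exact aux_core hn hx1 (abs_nonneg _) hB hd
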